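/- Given morphisms u : Y → A, v : Y → B of 2-degenerate 3-computads (with A, B each having a single 3-cell as above), there exists a unique morphism k : Y → A × B with p∘k = u and q∘k = v, where on each 3-cell e with source y₁·y₂, k(e) = (f,g)₁ if (u(y₁),v(y₁)) ∈ {(a₁,b₁),(a₂,b₂)} and k(e) = (f,g)₂ otherwise. -/
import Mathlib


open CategoryTheory

/-- A 2-degenerate 3-computad: a single 0-cell, no 1-cells, so the data is a set of
2-cells, a set of 3-cells, and boundary maps into the free commutative monoid
(multisets) on the 2-cells. -/
structure DegComputad where
  C2 : Type
  C3 : Type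
  src : C3 → Multiset C2
  tgt : C3 → Multiset C2

/-- Morphisms of 2-degenerate 3-computads. -/
@[ext]
structure DegComputad.Hom (A B : DegComputad) where
  f2 : A.C2 → B.C2
  f3 : A.C3 → B.C3
  src_comm : ∀ e, B.src (f3 e) = Multiset.map f2 (A.src e)
  tgt_comm : ∀ e, B.tgt (f3 e) = Multiset.map f2 (A.tgt e)

instance : Category DegComputad where
  Hom := DegComputad.Hom
  id A := ⟨id, id, by simp, by simp⟩
  comp f g := ⟨g.f2 ∘ f.f2, g.f3 ∘ f.f3,
    by intro e; simp [f.src_comm, g.src_comm, Multiset.map_map],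
    by intro e; simp [f.tgt_comm, g.tgt_comm, Multiset.map_map]⟩

@[simp] lemma DegComputad.id_f2 (A : DegComputad) : (𝟙 A : A ⟶ A).f2 = id := rfl
@[simp] lemma DegComputad.id_f3 (A : DegComputad) : (𝟙 A : A ⟶ A).f3 = id := rfl
@[simp] lemma DegComputad.comp_f2 {A B C : DegComputad} (f : A ⟶ B) (g : B ⟶ C) :
    (f ≫ g).f2 = g.f2 ∘ f.f2 := rfl
@[simp] lemma DegComputad.comp_f3 {A B C : DegComputad} (f : A ⟶ B) (g : B ⟶ C) :
    (f ≫ g).f3 = g.f3 ∘ f.f3 := rfl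
/-- The computad `A`: 2-cells `a₁,a₂,a₃` (as `0,1,2`), one 3-cell `f : a₁·a₂ → a₃`. -/
abbrev CompA : DegComputad := ⟨Fin 3, Unit, fun _ => {0, 1}, fun _ => {2}⟩

/-- The computad `B`: an isomorphic copy of `A`, with 2-cells `b₁,b₂,b₃` and
one 3-cell `g : b₁·b₂ → b₃`. -/
abbrev CompB : DegComputad := ⟨Fin 3, Unit, fun _ => {0, 1}, fun _ => {2}⟩

/-- The putative product `A × B`: nine 2-cells `(aᵢ,bⱼ)` and two 3-cells
`(f,g)₁ : (a₁,b₁)·(a₂,b₂) → (a₃,b₃)` and `(f,g)₂ : (a₂,b₁)·(a₁,b₂) → (a₃,b₃)`. -/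
abbrev CompAB : DegComputad :=
  ⟨Fin 3 × Fin 3, Fin 2,
   fun e => if e = 0 then {((0 : Fin 3), (0 : Fin 3)), (1, 1)} else {(1, 0), (0, 1)},
   fun _ => {(2, 2)}⟩

/-- First projection `A × B ⟶ A`. -/
def projA : CompAB ⟶ CompA :=
  ⟨Prod.fst, fun _ => (), by decide, by decide⟩

/-- Second projection `A × B ⟶ B`. -/
def projB : CompAB ⟶ CompB :=
  ⟨Prod.snd, fun _ => (), by decide, by decide⟩


section Stmt13Aux

variable {Y : DegComputad}

private lemma aux_decide1 : ∀ p q : Fin 3 × Fin 3,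
    ({0,1} : Multiset (Fin 3)) = {p.1, q.1} → ({0,1} : Multiset (Fin 3)) = {p.2, q.2} →
    (({p, q} : Multiset (Fin 3 × Fin 3)) = {(0,0), (1,1)} ∨
      ({p, q} : Multiset (Fin 3 × Fin 3)) = {(1,0), (0,1)}) := by decide

private lemma aux_decide2 : ∀ p q : Fin 3 × Fin 3,
    ({0,1} : Multiset (Fin 3)) = {p.1, q.1} → ({0,1} : Multiset (Fin 3)) = {p.2, q.2} →
    (({p, q} : Multiset (Fin 3 × Fin 3)) = {(0,0), (1,1)} ↔ p = (0,0) ∨ p = (1,1)) := by decide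

private lemma fin2_cases : ∀ x : Fin 2, x = 0 ∨ x = 1 := by decide

private lemma fin2_eq : ∀ x y : Fin 2, (x = 0 ↔ y = 0) → x = y := by decide

private lemma srcDecomp (u : Y ⟶ CompA) (e : Y.C3) : ∃ y₁ y₂, Y.src e = {y₁, y₂} := by
  have h := u.src_comm e
  have hc : Multiset.card (Y.src e) = 2 := by
    have := congrArg Multiset.card h
    simpa using this.symm
  exact Multiset.card_eq_two.mp hc

private lemma srcConstraints (u : Y ⟶ CompA) (v : Y ⟶ CompB) (e : Y.C3) (y₁ y₂ : Y.C2) (hs : Y.src e = {y₁, y₂}) :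
    ({0,1} : Multiset (Fin 3)) = {u.f2 y₁, u.f2 y₂} ∧
    ({0,1} : Multiset (Fin 3)) = {v.f2 y₁, v.f2 y₂} := by
  constructor
  · have h := u.src_comm e; rw [hs] at h; simpa using h
  · have h := v.src_comm e; rw [hs] at h; simpa using h

private lemma mapPair (u : Y ⟶ CompA) (v : Y ⟶ CompB) (e : Y.C3) :
    Multiset.map (fun y => (u.f2 y, v.f2 y)) (Y.src e) = {((0:Fin 3),(0:Fin 3)), (1,1)} ∨
    Multiset.map (fun y => (u.f2 y, v.f2 y)) (Y.src e) = {(1,0), (0,1)} := by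
  obtain ⟨y₁, y₂, hs⟩ := srcDecomp u e
  obtain ⟨h1, h2⟩ := srcConstraints u v e y₁ y₂ hs
  rw [hs]
  simpa using aux_decide1 (u.f2 y₁, v.f2 y₁) (u.f2 y₂, v.f2 y₂) h1 h2

private lemma tgtMap (u : Y ⟶ CompA) (v : Y ⟶ CompB) (e : Y.C3) :
    Multiset.map (fun y => (u.f2 y, v.f2 y)) (Y.tgt e) = {((2:Fin 3),(2:Fin 3))} := by
  have h := u.tgt_comm e
  have hc : Multiset.card (Y.tgt e) = 1 := by
    have := congrArg Multiset.card h
    simpa using this.symm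
  obtain ⟨t, ht⟩ := Multiset.card_eq_one.mp hc
  rw [ht] at h ⊢
  have hu : u.f2 t = 2 := by simpa using h.symm
  have hv : v.f2 t = 2 := by
    have h' := v.tgt_comm e; rw [ht] at h'; simpa using h'.symm
  simp [hu, hv]

/-- The pairing morphism. -/
private def kHom (u : Y ⟶ CompA) (v : Y ⟶ CompB) : Y ⟶ CompAB where
  f2 y := (u.f2 y, v.f2 y)
  f3 e := if Multiset.map (fun y => (u.f2 y, v.f2 y)) (Y.src e)
      = {((0:Fin 3),(0:Fin 3)), (1,1)} then 0 else 1
  src_comm e := by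
    dsimp only
    by_cases h : Multiset.map (fun y => (u.f2 y, v.f2 y)) (Y.src e)
        = {((0:Fin 3),(0:Fin 3)), (1,1)}
    · rw [if_pos h]; exact h.symm
    · rw [if_neg h]; exact ((mapPair u v e).resolve_left h).symm
  tgt_comm e := (tgtMap u v e).symm

private lemma k_iff (u : Y ⟶ CompA) (v : Y ⟶ CompB) (k : Y ⟶ CompAB) (hf2 : k.f2 = fun y => (u.f2 y, v.f2 y)) (e : Y.C3) :
    k.f3 e = 0 ↔
      Multiset.map (fun y => (u.f2 y, v.f2 y)) (Y.src e) = {((0:Fin 3),(0:Fin 3)), (1,1)} := by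
  have hsrc := k.src_comm e
  rw [hf2] at hsrc
  constructor
  · intro h0; rw [h0] at hsrc; exact hsrc.symm
  · intro hm
    rw [hm] at hsrc
    have h01 := fin2_cases (k.f3 e)
    rcases h01 with h | h
    · exact h
    · rw [h] at hsrc
      exact absurd hsrc (by decide)

private lemma k_f2_eq (u : Y ⟶ CompA) (v : Y ⟶ CompB) (k : Y ⟶ CompAB) (hA : k ≫ projA = u) (hB : k ≫ projB = v) :
    k.f2 = fun y => (u.f2 y, v.f2 y) := by
  have hu2 : Prod.fst ∘ k.f2 = u.f2 := congrArg DegComputad.Hom.f2 hA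
  have hv2 : Prod.snd ∘ k.f2 = v.f2 := congrArg DegComputad.Hom.f2 hB
  funext y
  exact Prod.ext (congrFun hu2 y) (congrFun hv2 y)

end Stmt13Aux

/-- Given morphisms `u : Y ⟶ A`, `v : Y ⟶ B` (with `A`, `B` each having a single
3-cell), there is a unique morphism `k : Y ⟶ A × B` with `k ≫ p = u` and `k ≫ q = v`;
moreover on each 3-cell `e` with source `y₁·y₂`, `k(e)` is the first 3-cell `(f,g)₁`
of `A × B` precisely when `(u(y₁), v(y₁)) ∈ {(a₁,b₁), (a₂,b₂)}`, and the second
3-cell `(f,g)₂` otherwise. -/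


theorem stmt13 (Y : DegComputad) (u : Y ⟶ CompA) (v : Y ⟶ CompB) :
    (∃! k : Y ⟶ CompAB, k ≫ projA = u ∧ k ≫ projB = v) ∧
    (∀ k : Y ⟶ CompAB, k ≫ projA = u ∧ k ≫ projB = v →
      ∀ (e : Y.C3) (y₁ y₂ : Y.C2), Y.src e = {y₁, y₂} →
        (k.f3 e = 0 ↔
          ((u.f2 y₁, v.f2 y₁) = ((0 : Fin 3), (0 : Fin 3)) ∨
           (u.f2 y₁, v.f2 y₁) = (1, 1)))) := by
  constructor
  · refine ⟨kHom u v, ⟨?_, ?_⟩, ?_⟩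
    · apply DegComputad.Hom.ext
      · rfl
      · rfl
    · apply DegComputad.Hom.ext
      · rfl
      · rfl
    · rintro k ⟨hA, hB⟩
      have hf2 := k_f2_eq u v k hA hB
      apply DegComputad.Hom.ext
      · exact hf2
      · funext e
        have h1 := k_iff u v k hf2 e
        have h2 := k_iff u v (kHom u v) rfl e
        exact fin2_eq _ _ (h1.trans h2.symm)
  · rintro k ⟨hA, hB⟩ e y₁ y₂ hs
    have hf2 := k_f2_eq u v k hA hB
    have h1 := k_iff u v k hf2 e
    rw [hs] at h1
    obtain ⟨hc1, hc2⟩ := srcConstraints u v e y₁ y₂ hs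
    have hd := aux_decide2 (u.f2 y₁, v.f2 y₁) (u.f2 y₂, v.f2 y₂) hc1 hc2
    rw [h1]
    simpa using hd
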